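/- Let A₀, A₁ be n×n real matrices, λ ∈ [0,1], and define 𝓛(X) = λA₁XA₁ᵀ + (1-λ)A₀XA₀ᵀ for n×n real matrices X. Suppose there exists a symmetric positive definite matrix Ξ such that Ξ - 𝓛(Ξ) is positive definite. Then for every n×n real matrix W there exists a unique n×n matrix X̄ satisfying X̄ = 𝓛(X̄) + W, and for every initial matrix X₀ the iterates X_{i+1} = 𝓛(X_i) + W converge to X̄ as i → ∞ (entrywise). -/

import Mathlib

open Matrix Filter

set_option linter.unusedSectionVars false
set_option maxHeartbeats 1000000

namespace Stmt13Aux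

variable {m : Type*} [Fintype m] [DecidableEq m]

lemma herm_of_symm {M : Matrix m m ℝ} (h : Mᵀ = M) : M.IsHermitian := by
  rwa [Matrix.IsHermitian, conjTranspose_eq_transpose_of_trivial]

lemma symm_of_herm {M : Matrix m m ℝ} (h : M.IsHermitian) : Mᵀ = M := by
  rwa [Matrix.IsHermitian, conjTranspose_eq_transpose_of_trivial] at h

/-- real quadratic form -/
def q (M : Matrix m m ℝ) (x : m → ℝ) : ℝ := x ⬝ᵥ (M *ᵥ x)

lemma psd_def {M : Matrix m m ℝ} (hsymm : Mᵀ = M) (h : ∀ x, 0 ≤ q M x) :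
    M.PosSemidef := .of_dotProduct_mulVec_nonneg (herm_of_symm hsymm) fun x => by simpa [q] using h x

lemma psd_q {M : Matrix m m ℝ} (h : M.PosSemidef) (x : m → ℝ) : 0 ≤ q M x := by
  simpa [q] using h.dotProduct_mulVec_nonneg x

lemma q_smul_mat (c : ℝ) (M : Matrix m m ℝ) (x : m → ℝ) : q (c • M) x = c * q M x := by
  simp [q, Matrix.smul_mulVec, dotProduct_smul]

lemma q_sub (M N : Matrix m m ℝ) (x : m → ℝ) : q (M - N) x = q M x - q N x := by
  simp [q, Matrix.sub_mulVec, dotProduct_sub]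

lemma q_add (M N : Matrix m m ℝ) (x : m → ℝ) : q (M + N) x = q M x + q N x := by
  simp [q, Matrix.add_mulVec, dotProduct_add]

lemma q_neg (M : Matrix m m ℝ) (x : m → ℝ) : q (-M) x = - q M x := by
  simp [q, Matrix.neg_mulVec, dotProduct_neg]

lemma q_smul_vec (M : Matrix m m ℝ) (a : ℝ) (x : m → ℝ) : q M (a • x) = a^2 * q M x := by
  simp [q, Matrix.mulVec_smul, smul_dotProduct, dotProduct_smul, smul_eq_mul]
  ring

lemma q_continuous (M : Matrix m m ℝ) : Continuous (q M) := by
  have : q M = fun x => ∑ i, x i * ∑ j, M i j * x j := by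
    ext x; simp [q, dotProduct, mulVec]
  rw [this]
  exact continuous_finset_sum _ fun i _ => (continuous_apply i).mul
    (continuous_finset_sum _ fun j _ => continuous_const.mul (continuous_apply j))

lemma q_single_single (M : Matrix m m ℝ) (i j : m) (c d : ℝ) :
    (Pi.single i c) ⬝ᵥ (M *ᵥ Pi.single j d) = c * M i j * d := by
  simp [mulVec_single, dotProduct_single]
  ring

lemma q_single (M : Matrix m m ℝ) (i : m) : q M (Pi.single i 1) = M i i := by
  simpa [q] using q_single_single M i i 1 1

lemma psd_diag {M : Matrix m m ℝ} (h : M.PosSemidef) (i : m) : 0 ≤ M i i := by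
  have := psd_q h (Pi.single i 1)
  rwa [q_single] at this

lemma psd_entry_bound {M : Matrix m m ℝ} (h : M.PosSemidef) (i j : m) :
    |M i j| ≤ M i i + M j j := by
  rcases eq_or_ne i j with rfl | hij
  · have := psd_diag h i
    rw [abs_of_nonneg this]; linarith
  · have hsym : M j i = M i j := by
      have := symm_of_herm h.1
      calc M j i = Mᵀ i j := rfl
      _ = M i j := by rw [this]
    have key : ∀ a : ℝ, 0 ≤ M i i + a * (2 * M i j) + a^2 * M j j := by
      intro a
      have := psd_q h (Pi.single i 1 + Pi.single j a)
      have expand : q M (Pi.single i 1 + Pi.single j a)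
          = M i i + a * (2 * M i j) + a^2 * M j j := by
        simp only [q, Matrix.mulVec_add, dotProduct_add, add_dotProduct,
          q_single_single]
        rw [hsym]; ring
      rwa [expand] at this
    have h1 := key 1
    have h2 := key (-1)
    have d1 := psd_diag h i
    have d2 := psd_diag h j
    rw [abs_le]
    constructor <;> nlinarith

lemma dominate (Ξ M : Matrix m m ℝ) (hΞ : Ξ.PosDef) :
    ∃ c : ℝ, 1 ≤ c ∧ ∀ x : m → ℝ, q M x ≤ c * q Ξ x := by
  rcases isEmpty_or_nonempty m with h | h
  · refine ⟨1, le_refl _, fun x => ?_⟩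
    simp [q, dotProduct]
  · have hcomp : IsCompact (Metric.sphere (0 : m → ℝ) 1) := isCompact_sphere 0 1
    have hne : (Metric.sphere (0 : m → ℝ) 1).Nonempty :=
      NormedSpace.sphere_nonempty.mpr zero_le_one
    obtain ⟨u, hu, hmin⟩ := hcomp.exists_isMinOn hne (q_continuous Ξ).continuousOn
    obtain ⟨v, hv, hmax⟩ := hcomp.exists_isMaxOn hne (q_continuous M).continuousOn
    have hu0 : u ≠ 0 := by
      intro h0
      rw [mem_sphere_iff_norm, h0] at hu; simp at hu
    have hfu : 0 < q Ξ u := by simpa [q] using hΞ.dotProduct_mulVec_pos hu0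
    set c : ℝ := max (q M v) 0 / q Ξ u + 1 with hc
    have hc1 : 1 ≤ c := by
      have : 0 ≤ max (q M v) 0 / q Ξ u := div_nonneg (le_max_right _ _) hfu.le
      simp [hc]; linarith
    refine ⟨c, hc1, fun x => ?_⟩
    rcases eq_or_ne x 0 with rfl | hx
    · simp [q]
    · set y : m → ℝ := ‖x‖⁻¹ • x with hy
      have hxn : ‖x‖ ≠ 0 := norm_ne_zero_iff.mpr hx
      have hys : y ∈ Metric.sphere (0 : m → ℝ) 1 := by
        rw [mem_sphere_iff_norm, sub_zero, hy, norm_smul]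
        simp [abs_of_nonneg (norm_nonneg x), inv_mul_cancel₀ hxn]
      have hxy : x = ‖x‖ • y := by
        rw [hy, smul_smul, mul_inv_cancel₀ hxn, one_smul]
      have key : q M y ≤ c * q Ξ y := by
        have h1 : q Ξ u ≤ q Ξ y := hmin hys
        have h2 : q M y ≤ q M v := hmax hys
        have h3 : c * q Ξ u ≤ c * q Ξ y :=
          mul_le_mul_of_nonneg_left h1 (by linarith)
        have h4 : q M v < c * q Ξ u := by
          rw [hc, add_mul, div_mul_cancel₀ _ hfu.ne', one_mul]
          have := le_max_left (q M v) 0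
          linarith
        linarith
      have e1 : q M x = ‖x‖^2 * q M y := by
        nth_rewrite 1 [hxy]; rw [q_smul_vec]
      have e2 : q Ξ x = ‖x‖^2 * q Ξ y := by
        nth_rewrite 1 [hxy]; rw [q_smul_vec]
      have hn2 : (0:ℝ) ≤ ‖x‖^2 := by positivity
      rw [e1, e2]
      calc ‖x‖^2 * q M y ≤ ‖x‖^2 * (c * q Ξ y) := mul_le_mul_of_nonneg_left key hn2
      _ = c * (‖x‖^2 * q Ξ y) := by ring

/-- The Lyapunov operator. -/
def Lop (A₀ A₁ : Matrix m m ℝ) (lam : ℝ) (X : Matrix m m ℝ) : Matrix m m ℝ :=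
  lam • (A₁ * X * A₁ᵀ) + (1 - lam) • (A₀ * X * A₀ᵀ)

variable (A₀ A₁ : Matrix m m ℝ) (lam : ℝ)

lemma Lop_add (X Y : Matrix m m ℝ) :
    Lop A₀ A₁ lam (X + Y) = Lop A₀ A₁ lam X + Lop A₀ A₁ lam Y := by
  simp only [Lop, Matrix.mul_add, Matrix.add_mul, smul_add]
  abel

lemma Lop_smul (a : ℝ) (X : Matrix m m ℝ) :
    Lop A₀ A₁ lam (a • X) = a • Lop A₀ A₁ lam X := by
  simp only [Lop, Matrix.mul_smul, Matrix.smul_mul, smul_add, smul_comm a]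

lemma Lop_sub (X Y : Matrix m m ℝ) :
    Lop A₀ A₁ lam (X - Y) = Lop A₀ A₁ lam X - Lop A₀ A₁ lam Y := by
  simp only [Lop, Matrix.mul_sub, Matrix.sub_mul, smul_sub]
  abel

lemma Lop_zero : Lop A₀ A₁ lam 0 = 0 := by
  simp [Lop]

lemma Lop_neg (X : Matrix m m ℝ) : Lop A₀ A₁ lam (-X) = -Lop A₀ A₁ lam X := by
  have := Lop_sub A₀ A₁ lam 0 X
  rw [Lop_zero] at this
  simpa using this

lemma q_conj (A S : Matrix m m ℝ) (x : m → ℝ) :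
    q (A * S * Aᵀ) x = q S (Aᵀ *ᵥ x) := by
  simp only [q, ← Matrix.mulVec_mulVec]
  rw [dotProduct_mulVec, Matrix.mulVec_transpose]

variable {lam : ℝ}

lemma Lop_qnn (h0 : 0 ≤ lam) (h1 : lam ≤ 1) {S : Matrix m m ℝ}
    (hS : ∀ x, 0 ≤ q S x) : ∀ x, 0 ≤ q (Lop A₀ A₁ lam S) x := by
  intro x
  rw [Lop, q_add, q_smul_mat, q_smul_mat, q_conj, q_conj]
  have := hS (A₁ᵀ *ᵥ x)
  have := hS (A₀ᵀ *ᵥ x)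
  have h1' : (0:ℝ) ≤ 1 - lam := by linarith
  positivity

lemma Lop_symm {S : Matrix m m ℝ} (hS : Sᵀ = S) :
    (Lop A₀ A₁ lam S)ᵀ = Lop A₀ A₁ lam S := by
  simp only [Lop, transpose_add, transpose_smul, transpose_mul, transpose_transpose, hS]
  rw [Matrix.mul_assoc, Matrix.mul_assoc]

lemma Lop_psd (h0 : 0 ≤ lam) (h1 : lam ≤ 1) {S : Matrix m m ℝ}
    (hS : S.PosSemidef) : (Lop A₀ A₁ lam S).PosSemidef :=
  psd_def (Lop_symm A₀ A₁ (symm_of_herm hS.1)) (Lop_qnn A₀ A₁ h0 h1 (psd_q hS))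

end Stmt13Aux

namespace Stmt13Aux

variable {m : Type*} [Fintype m] [DecidableEq m]
variable (A₀ A₁ : Matrix m m ℝ) {lam : ℝ}

lemma iter_sub (h : ∀ X Y : Matrix m m ℝ, Lop A₀ A₁ lam (X - Y)
      = Lop A₀ A₁ lam X - Lop A₀ A₁ lam Y)
    (k : ℕ) (U V : Matrix m m ℝ) :
    (Lop A₀ A₁ lam)^[k] (U - V) = (Lop A₀ A₁ lam)^[k] U - (Lop A₀ A₁ lam)^[k] V := by
  induction k with
  | zero => simp
  | succ k ih =>
    rw [Function.iterate_succ_apply', Function.iterate_succ_apply',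
      Function.iterate_succ_apply', ih, h]

theorem decay_psd (h0 : 0 ≤ lam) (h1 : lam ≤ 1) (Ξ : Matrix m m ℝ) (hΞ : Ξ.PosDef)
    (hly : (Ξ - Lop A₀ A₁ lam Ξ).PosDef) {P : Matrix m m ℝ} (hP : P.PosSemidef) :
    Tendsto (fun k => (Lop A₀ A₁ lam)^[k] P) atTop (nhds 0) := by
  obtain ⟨c, hc1, hcq⟩ := dominate (Ξ - Lop A₀ A₁ lam Ξ) Ξ hly
  have hc0 : (0:ℝ) < c := lt_of_lt_of_le one_pos hc1
  set ρ : ℝ := 1 - 1/c with hρ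
  have hρ0 : 0 ≤ ρ := by
    have h' : 1/c ≤ 1 := by
      rw [div_le_one hc0]; exact hc1
    rw [hρ]; linarith
  have hρ1 : ρ < 1 := by
    have h' : 0 < 1/c := by positivity
    rw [hρ]; linarith
  have hstep : ∀ x, q (Lop A₀ A₁ lam Ξ) x ≤ ρ * q Ξ x := by
    intro x
    have h' := hcq x
    rw [q_sub] at h'
    have h'' := mul_le_mul_of_nonneg_left h' (by positivity : (0:ℝ) ≤ 1/c)
    rw [← mul_assoc, one_div_mul_cancel hc0.ne', one_mul] at h''
    have : (1/c) * q Ξ x ≤ q Ξ x - q (Lop A₀ A₁ lam Ξ) x := h''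
    rw [hρ]; nlinarith
  have hmono : ∀ (t : ℝ) (S : Matrix m m ℝ), (∀ x, q S x ≤ t * q Ξ x) →
      ∀ x, q (Lop A₀ A₁ lam S) x ≤ t * q (Lop A₀ A₁ lam Ξ) x := by
    intro t S hS x
    have hq : ∀ y, 0 ≤ q (t • Ξ - S) y := by
      intro y; rw [q_sub, q_smul_mat]; linarith [hS y]
    have := Lop_qnn A₀ A₁ h0 h1 hq x
    rw [Lop_sub, Lop_smul, q_sub, q_smul_mat] at this
    linarith
  obtain ⟨c₀, hc₀1, hc₀⟩ := dominate Ξ P hΞ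
  have inv : ∀ k, ((Lop A₀ A₁ lam)^[k] P).PosSemidef ∧
      ∀ x, q ((Lop A₀ A₁ lam)^[k] P) x ≤ (c₀ * ρ^k) * q Ξ x := by
    intro k
    induction k with
    | zero =>
      refine ⟨by simpa using hP, fun x => ?_⟩
      simpa using hc₀ x
    | succ k ih =>
      rw [Function.iterate_succ_apply']
      refine ⟨Lop_psd A₀ A₁ h0 h1 ih.1, fun x => ?_⟩
      have step1 := hmono (c₀ * ρ^k) _ ih.2 x
      have hpos : (0:ℝ) ≤ c₀ * ρ^k := by positivity
      have step2 : (c₀*ρ^k) * q (Lop A₀ A₁ lam Ξ) x ≤ (c₀*ρ^k) * (ρ * q Ξ x) :=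
        mul_le_mul_of_nonneg_left (hstep x) hpos
      calc q (Lop A₀ A₁ lam ((Lop A₀ A₁ lam)^[k] P)) x
          ≤ (c₀*ρ^k) * (ρ * q Ξ x) := le_trans step1 step2
      _ = (c₀ * ρ^(k+1)) * q Ξ x := by ring
  apply tendsto_pi_nhds.mpr
  intro i
  rw [tendsto_pi_nhds]
  intro j
  simp only [Matrix.zero_apply]
  apply squeeze_zero_norm (a := fun k => (c₀ * (Ξ i i + Ξ j j)) * ρ^k)
  · intro k
    have hpsd := (inv k).1
    have hdi : ((Lop A₀ A₁ lam)^[k] P) i i ≤ (c₀ * ρ^k) * Ξ i i := by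
      have := (inv k).2 (Pi.single i 1)
      rwa [q_single, q_single] at this
    have hdj : ((Lop A₀ A₁ lam)^[k] P) j j ≤ (c₀ * ρ^k) * Ξ j j := by
      have := (inv k).2 (Pi.single j 1)
      rwa [q_single, q_single] at this
    have := psd_entry_bound hpsd i j
    rw [Real.norm_eq_abs]
    calc |((Lop A₀ A₁ lam)^[k] P) i j|
        ≤ ((Lop A₀ A₁ lam)^[k] P) i i + ((Lop A₀ A₁ lam)^[k] P) j j := this
    _ ≤ (c₀ * ρ^k) * Ξ i i + (c₀ * ρ^k) * Ξ j j := add_le_add hdi hdj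
    _ = (c₀ * (Ξ i i + Ξ j j)) * ρ^k := by ring
  · have := (tendsto_pow_atTop_nhds_zero_of_lt_one hρ0 hρ1).const_mul
      (c₀ * (Ξ i i + Ξ j j))
    simpa using this

theorem decay_symm (h0 : 0 ≤ lam) (h1 : lam ≤ 1) (Ξ : Matrix m m ℝ) (hΞ : Ξ.PosDef)
    (hly : (Ξ - Lop A₀ A₁ lam Ξ).PosDef) {X : Matrix m m ℝ} (hX : Xᵀ = X) :
    Tendsto (fun k => (Lop A₀ A₁ lam)^[k] X) atTop (nhds 0) := by
  obtain ⟨c, hc1, hcb⟩ := dominate Ξ (-X) hΞ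
  have hc0 : (0:ℝ) ≤ c := le_trans zero_le_one hc1
  have hΞsym : Ξᵀ = Ξ := symm_of_herm hΞ.1
  have hP : (c • Ξ + X).PosSemidef := by
    refine psd_def ?_ fun x => ?_
    · rw [transpose_add, transpose_smul, hΞsym, hX]
    · rw [q_add, q_smul_mat]
      have := hcb x
      rw [q_neg] at this
      linarith
  have hQ : (c • Ξ).PosSemidef := by
    refine psd_def ?_ fun x => ?_
    · rw [transpose_smul, hΞsym]
    · rw [q_smul_mat]
      exact mul_nonneg hc0 (psd_q hΞ.posSemidef x)
  have key : ∀ k, (Lop A₀ A₁ lam)^[k] X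
      = (Lop A₀ A₁ lam)^[k] (c • Ξ + X) - (Lop A₀ A₁ lam)^[k] (c • Ξ) := by
    intro k
    rw [← iter_sub A₀ A₁ (Lop_sub A₀ A₁ lam)]
    congr 1
    abel
  have := (decay_psd A₀ A₁ h0 h1 Ξ hΞ hly hP).sub (decay_psd A₀ A₁ h0 h1 Ξ hΞ hly hQ)
  rw [sub_zero] at this
  exact this.congr fun k => (key k).symm

end Stmt13Aux

namespace Stmt13Aux

variable {m : Type*} [Fintype m] [DecidableEq m]

lemma pd_fromBlocks {P Q : Matrix m m ℝ} (hP : P.PosDef) (hQ : Q.PosDef) :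
    (Matrix.fromBlocks P 0 0 Q).PosDef := by
  refine .of_dotProduct_mulVec_pos ?_ ?_
  · rw [Matrix.IsHermitian, fromBlocks_conjTranspose, conjTranspose_zero, hP.1.eq, hQ.1.eq]
  · intro x hx
    have hsplit : Sum.elim (x ∘ Sum.inl) (x ∘ Sum.inr) = x := Sum.elim_comp_inl_inr x
    have hmv : (fromBlocks P 0 0 Q) *ᵥ x
        = Sum.elim (P *ᵥ (x ∘ Sum.inl)) (Q *ᵥ (x ∘ Sum.inr)) := by
      rw [fromBlocks_mulVec]; simp
    rw [star_trivial, hmv]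
    nth_rewrite 1 [← hsplit]
    rw [sumElim_dotProduct_sumElim]
    by_cases h1 : x ∘ Sum.inl = 0
    · have h2 : x ∘ Sum.inr ≠ 0 := by
        intro h2
        apply hx
        funext i
        cases i with
        | inl i => exact congrFun h1 i
        | inr i => exact congrFun h2 i
      have p2 : 0 < (x ∘ Sum.inr) ⬝ᵥ Q *ᵥ (x ∘ Sum.inr) := by
        simpa using hQ.dotProduct_mulVec_pos h2
      have p1 : 0 ≤ (x ∘ Sum.inl) ⬝ᵥ P *ᵥ (x ∘ Sum.inl) := by
        simpa using hP.posSemidef.dotProduct_mulVec_nonneg (x ∘ Sum.inl)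
      linarith
    · have p1 : 0 < (x ∘ Sum.inl) ⬝ᵥ P *ᵥ (x ∘ Sum.inl) := by
        simpa using hP.dotProduct_mulVec_pos h1
      have p2 : 0 ≤ (x ∘ Sum.inr) ⬝ᵥ Q *ᵥ (x ∘ Sum.inr) := by
        simpa using hQ.posSemidef.dotProduct_mulVec_nonneg (x ∘ Sum.inr)
      linarith

lemma Lop_fromBlocks (A₀ A₁ : Matrix m m ℝ) (lam : ℝ) (P Q R S : Matrix m m ℝ) :
    Lop (fromBlocks A₀ 0 0 A₀) (fromBlocks A₁ 0 0 A₁) lam (fromBlocks P Q R S)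
      = fromBlocks (Lop A₀ A₁ lam P) (Lop A₀ A₁ lam Q)
          (Lop A₀ A₁ lam R) (Lop A₀ A₁ lam S) := by
  simp [Lop, fromBlocks_transpose, fromBlocks_multiply, fromBlocks_smul, fromBlocks_add]

lemma iter_add (A₀ A₁ : Matrix m m ℝ) {lam : ℝ} (k : ℕ) (U V : Matrix m m ℝ) :
    (Lop A₀ A₁ lam)^[k] (U + V) = (Lop A₀ A₁ lam)^[k] U + (Lop A₀ A₁ lam)^[k] V := by
  induction k with
  | zero => simp
  | succ k ih =>
    rw [Function.iterate_succ_apply', Function.iterate_succ_apply',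
      Function.iterate_succ_apply', ih, Lop_add]

theorem decay_all (A₀ A₁ : Matrix m m ℝ) {lam : ℝ} (h0 : 0 ≤ lam) (h1 : lam ≤ 1)
    (Ξ : Matrix m m ℝ) (hΞ : Ξ.PosDef) (hly : (Ξ - Lop A₀ A₁ lam Ξ).PosDef)
    (X : Matrix m m ℝ) :
    Tendsto (fun k => (Lop A₀ A₁ lam)^[k] X) atTop (nhds 0) := by
  set S : Matrix m m ℝ := (1/2 : ℝ) • (X + Xᵀ) with hSdef
  set K : Matrix m m ℝ := (1/2 : ℝ) • (X - Xᵀ) with hKdef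
  have hS : Sᵀ = S := by
    rw [hSdef, transpose_smul, transpose_add, transpose_transpose, add_comm]
  have hK : Kᵀ = -K := by
    rw [hKdef, transpose_smul, transpose_sub, transpose_transpose, ← smul_neg, neg_sub]
  have hXSK : X = S + K := by
    rw [hSdef, hKdef]
    module
  -- symmetric part decays
  have decayS := decay_symm A₀ A₁ h0 h1 Ξ hΞ hly hS
  -- antisymmetric part via block embedding
  have hΞb : (fromBlocks Ξ 0 0 Ξ).PosDef := pd_fromBlocks hΞ hΞ
  have hlyb : ((fromBlocks Ξ 0 0 Ξ) -
      Lop (fromBlocks A₀ 0 0 A₀) (fromBlocks A₁ 0 0 A₁) lam (fromBlocks Ξ 0 0 Ξ)).PosDef := by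
    rw [Lop_fromBlocks, Lop_zero]
    have : (fromBlocks Ξ 0 0 Ξ) - fromBlocks (Lop A₀ A₁ lam Ξ) 0 0 (Lop A₀ A₁ lam Ξ)
        = fromBlocks (Ξ - Lop A₀ A₁ lam Ξ) 0 0 (Ξ - Lop A₀ A₁ lam Ξ) := by
      rw [sub_eq_add_neg, fromBlocks_neg, fromBlocks_add]
      simp [sub_eq_add_neg]
    rw [this]
    exact pd_fromBlocks hly hly
  have hKb : (fromBlocks 0 K (-K) 0 : Matrix (m ⊕ m) (m ⊕ m) ℝ)ᵀ
      = fromBlocks 0 K (-K) 0 := by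
    rw [fromBlocks_transpose, transpose_neg, hK, transpose_zero, neg_neg]
  have decayKb := decay_symm (fromBlocks A₀ 0 0 A₀) (fromBlocks A₁ 0 0 A₁)
    h0 h1 (fromBlocks Ξ 0 0 Ξ) hΞb hlyb hKb
  have iterKb : ∀ k, (Lop (fromBlocks A₀ 0 0 A₀) (fromBlocks A₁ 0 0 A₁) lam)^[k]
      (fromBlocks 0 K (-K) 0)
      = fromBlocks 0 ((Lop A₀ A₁ lam)^[k] K) (-((Lop A₀ A₁ lam)^[k] K)) 0 := by
    intro k
    induction k with
    | zero => simp
    | succ k ih =>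
      rw [Function.iterate_succ_apply', Function.iterate_succ_apply', ih,
        Lop_fromBlocks, Lop_zero, Lop_neg]
  have decayK : ∀ i j, Tendsto (fun k => ((Lop A₀ A₁ lam)^[k] K) i j) atTop (nhds 0) := by
    intro i j
    have h1' := tendsto_pi_nhds.mp decayKb (Sum.inl i)
    have h2' := tendsto_pi_nhds.mp h1' (Sum.inr j)
    simp only [Matrix.zero_apply] at h2'
    refine h2'.congr fun k => ?_
    rw [iterKb k, fromBlocks_apply₁₂]
  apply tendsto_pi_nhds.mpr
  intro i
  rw [tendsto_pi_nhds]
  intro j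
  simp only [Matrix.zero_apply]
  have hSij : Tendsto (fun k => ((Lop A₀ A₁ lam)^[k] S) i j) atTop (nhds 0) := by
    have h1' := tendsto_pi_nhds.mp decayS i
    have h2' := tendsto_pi_nhds.mp h1' j
    simpa using h2'
  have := hSij.add (decayK i j)
  rw [add_zero] at this
  refine this.congr fun k => ?_
  rw [← Matrix.add_apply, ← iter_add, ← hXSK]

end Stmt13Aux


open Stmt13Aux

/-- Under a Lyapunov certificate of mean-square stability, the affine recursion
`X_{i+1} = 𝓛(X_i) + W` has a unique fixed point `X̄`, to which the iterates converge
from any initial condition. -/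
theorem stmt13 (n : ℕ) (A₀ A₁ : Matrix (Fin n) (Fin n) ℝ)
    (lam : ℝ) (hlam0 : 0 ≤ lam) (hlam1 : lam ≤ 1)
    (L : Matrix (Fin n) (Fin n) ℝ → Matrix (Fin n) (Fin n) ℝ)
    (hL : ∀ X, L X = lam • (A₁ * X * A₁ᵀ) + (1 - lam) • (A₀ * X * A₀ᵀ))
    (Ξ : Matrix (Fin n) (Fin n) ℝ) (hΞ : Ξ.PosDef) (hlyap : (Ξ - L Ξ).PosDef)
    (W : Matrix (Fin n) (Fin n) ℝ) :
    ∃ Xbar : Matrix (Fin n) (Fin n) ℝ,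
      Xbar = L Xbar + W ∧
      (∀ Y : Matrix (Fin n) (Fin n) ℝ, Y = L Y + W → Y = Xbar) ∧
      ∀ X : ℕ → Matrix (Fin n) (Fin n) ℝ,
        (∀ i, X (i + 1) = L (X i) + W) →
        Tendsto X atTop (nhds Xbar) := by
  have hLeq : L = Lop A₀ A₁ lam := funext hL
  subst hLeq
  have decayall : ∀ Z : Matrix (Fin n) (Fin n) ℝ,
      Tendsto (fun k => (Lop A₀ A₁ lam)^[k] Z) atTop (nhds 0) :=
    decay_all A₀ A₁ hlam0 hlam1 Ξ hΞ hlyap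
  have fix_zero : ∀ Z : Matrix (Fin n) (Fin n) ℝ, Z = Lop A₀ A₁ lam Z → Z = 0 := by
    intro Z hZ
    have hiter : ∀ k, (Lop A₀ A₁ lam)^[k] Z = Z := by
      intro k
      induction k with
      | zero => simp
      | succ k ih => rw [Function.iterate_succ_apply', ih, ← hZ]
    have : Tendsto (fun _ : ℕ => Z) atTop (nhds (0 : Matrix (Fin n) (Fin n) ℝ)) :=
      (decayall Z).congr fun k => hiter k
    exact tendsto_nhds_unique tendsto_const_nhds this
  -- the linear map X ↦ X - L X
  let φ : Matrix (Fin n) (Fin n) ℝ →ₗ[ℝ] Matrix (Fin n) (Fin n) ℝ :=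
    { toFun := fun X => X - Lop A₀ A₁ lam X
      map_add' := fun X Y => by
        show (X + Y) - Lop A₀ A₁ lam (X + Y)
          = (X - Lop A₀ A₁ lam X) + (Y - Lop A₀ A₁ lam Y)
        rw [Lop_add]; abel
      map_smul' := fun a X => by
        show a • X - Lop A₀ A₁ lam (a • X) = a • (X - Lop A₀ A₁ lam X)
        rw [Lop_smul, smul_sub] }
  have hφ : ∀ X, φ X = X - Lop A₀ A₁ lam X := fun _ => rfl
  have hinj : Function.Injective φ := by
    intro X Y h
    rw [hφ, hφ] at h
    have hd : X - Y = Lop A₀ A₁ lam (X - Y) := by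
      rw [Lop_sub]
      exact sub_eq_sub_iff_sub_eq_sub.mp h
    have := fix_zero _ hd
    exact sub_eq_zero.mp this
  have hsurj : Function.Surjective φ := LinearMap.injective_iff_surjective.mp hinj
  obtain ⟨Xbar, hXbar⟩ := hsurj W
  rw [hφ] at hXbar
  have hfix : Xbar = Lop A₀ A₁ lam Xbar + W := by
    rw [← hXbar]; abel
  refine ⟨Xbar, hfix, fun Y hY => ?_, fun X hX => ?_⟩
  · have hd : Y - Xbar = Lop A₀ A₁ lam (Y - Xbar) := by
      rw [Lop_sub]
      calc Y - Xbar = (Lop A₀ A₁ lam Y + W) - (Lop A₀ A₁ lam Xbar + W) := by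
            rw [← hY, ← hfix]
      _ = Lop A₀ A₁ lam Y - Lop A₀ A₁ lam Xbar := by abel
    exact sub_eq_zero.mp (fix_zero _ hd)
  · have form : ∀ i, X i = Xbar + (Lop A₀ A₁ lam)^[i] (X 0 - Xbar) := by
      intro i
      induction i with
      | zero => simp
      | succ i ih =>
        rw [hX i, ih, Function.iterate_succ_apply', Lop_add]
        nth_rewrite 3 [hfix]
        abel
    have := (decayall (X 0 - Xbar)).const_add Xbar
    rw [add_zero] at this
    exact this.congr fun i => (form i).symm
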